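/- arXiv:1907.05679 — 2 statements merged into one kernel-verified Lean document; each statement's English description precedes it below -/
import Mathlib

section
/- Let λ₀ ≥ 0, let V, f₁, f₂ : (-∞,0] → M_n(ℂ) be continuous, bounded, Hermitian-matrix-valued with f₁(x) positive definite and f₂(x) positive semidefinite for all x, and let B ∈ M_n(ℂ) be Hermitian. Suppose y₀ is a nonzero H²-solution on (-∞,0] of y₀″ + V y₀ = λ₀ f₁ y₀ + λ₀² f₂ y₀ with B y₀(0) = y₀′(0). Then there exists no H²-solution y₁ on (-∞,0] satisfying B y₁(0) = y₁′(0) and y₁″ + V y₁ − λ₀ f₁ y₁ − λ₀² f₂ y₁ = (f₁ + 2λ₀ f₂) y₀; that is, every nonnegative eigenvalue of the half-line Robin problem is semisimple. -/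
open MeasureTheory Matrix Set
open scoped ComplexOrder

noncomputable section

open scoped InnerProductSpace

/-- Action of a complex `n × n` matrix on `ℂⁿ` with the Euclidean structure. -/
def mact {n : ℕ} (M : Matrix (Fin n) (Fin n) ℂ) (v : EuclideanSpace ℂ (Fin n)) :
    EuclideanSpace ℂ (Fin n) :=
  Matrix.toEuclideanCLM (𝕜 := ℂ) M v

lemma mact_symm {n : ℕ} {M : Matrix (Fin n) (Fin n) ℂ} (hM : M.IsHermitian)
    (u v : EuclideanSpace ℂ (Fin n)) :
    ⟪mact M u, v⟫_ℂ = ⟪u, mact M v⟫_ℂ := by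
  have h : Matrix.toEuclideanCLM (𝕜 := ℂ) M
      = ContinuousLinearMap.adjoint (Matrix.toEuclideanCLM (𝕜 := ℂ) M) := by
    rw [← ContinuousLinearMap.star_eq_adjoint, ← map_star]
    congr 1
    exact hM.symm
  conv_lhs => rw [mact, h]
  exact ContinuousLinearMap.adjoint_inner_left _ _ _

lemma mact_inner_eq_dot {n : ℕ} (M : Matrix (Fin n) (Fin n) ℂ) (v : EuclideanSpace ℂ (Fin n)) :
    ⟪v, mact M v⟫_ℂ = dotProduct (star (WithLp.equiv _ _ v)) (M *ᵥ (WithLp.equiv _ _ v)) := by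
  rw [mact, EuclideanSpace.inner_eq_star_dotProduct, Matrix.ofLp_toEuclideanCLM, dotProduct_comm]
  rfl

lemma mact_self_nonneg {n : ℕ} {M : Matrix (Fin n) (Fin n) ℂ} (hM : M.PosSemidef)
    (v : EuclideanSpace ℂ (Fin n)) : 0 ≤ ⟪v, mact M v⟫_ℂ := by
  rw [mact_inner_eq_dot]; exact hM.dotProduct_mulVec_nonneg _

lemma mact_self_pos {n : ℕ} {M : Matrix (Fin n) (Fin n) ℂ} (hM : M.PosDef)
    {v : EuclideanSpace ℂ (Fin n)} (hv : v ≠ 0) : 0 < ⟪v, mact M v⟫_ℂ := by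
  rw [mact_inner_eq_dot]
  exact hM.dotProduct_mulVec_pos (fun h => hv ((WithLp.equiv _ _).injective h))

lemma norm_mact_le {n : ℕ} (M : Matrix (Fin n) (Fin n) ℂ) (v : EuclideanSpace ℂ (Fin n)) :
    ‖mact M v‖ ≤ ‖Matrix.toEuclideanCLM (𝕜 := ℂ) M‖ * ‖v‖ :=
  (Matrix.toEuclideanCLM (𝕜 := ℂ) M).le_opNorm v

lemma mact_contOn {n : ℕ} {F : ℝ → Matrix (Fin n) (Fin n) ℂ} {u : ℝ → EuclideanSpace ℂ (Fin n)}
    {s : Set ℝ} (hF : ContinuousOn F s) (hu : ContinuousOn u s) :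
    ContinuousOn (fun x => mact (F x) (u x)) s := by
  have hlin : IsLinearMap ℂ (fun M : Matrix (Fin n) (Fin n) ℂ =>
      Matrix.toEuclideanCLM (𝕜 := ℂ) M) := ⟨fun a b => map_add _ a b, fun c a => map_smul _ c a⟩
  have hT : Continuous (fun M : Matrix (Fin n) (Fin n) ℂ => Matrix.toEuclideanCLM (𝕜 := ℂ) M) :=
    (hlin.mk' _).continuous_of_finiteDimensional
  exact (hT.comp_continuousOn hF).clm_apply hu
lemma mact_add {n : ℕ} (M N : Matrix (Fin n) (Fin n) ℂ) (v : EuclideanSpace ℂ (Fin n)) :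
    mact (M + N) v = mact M v + mact N v := by
  simp [mact, map_add]

lemma mact_smul {n : ℕ} (c : ℂ) (M : Matrix (Fin n) (Fin n) ℂ) (v : EuclideanSpace ℂ (Fin n)) :
    mact (c • M) v = c • mact M v := by
  simp [mact, _root_.map_smul]

/-- nonnegative eigenvalues of the half-line Robin problem are semisimple:
there is no generalized eigenfunction `y₁` above a genuine eigenfunction `y₀`. -/
theorem halfline_robin_nonneg_eigenvalue_semisimple {n : ℕ} (hn : 1 ≤ n)
    (lam₀ : ℝ) (hlam₀ : 0 ≤ lam₀)
    (V f₁ f₂ : ℝ → Matrix (Fin n) (Fin n) ℂ)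
    (hVcont : ContinuousOn V (Iic 0))
    (hf₁cont : ContinuousOn f₁ (Iic 0))
    (hf₂cont : ContinuousOn f₂ (Iic 0))
    (hbdd : ∃ C : ℝ, ∀ x ∈ Iic (0 : ℝ),
      ‖Matrix.toEuclideanCLM (𝕜 := ℂ) (V x)‖ ≤ C ∧
      ‖Matrix.toEuclideanCLM (𝕜 := ℂ) (f₁ x)‖ ≤ C ∧
      ‖Matrix.toEuclideanCLM (𝕜 := ℂ) (f₂ x)‖ ≤ C)
    (hVherm : ∀ x ∈ Iic (0 : ℝ), (V x).IsHermitian)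
    (hf₁herm : ∀ x ∈ Iic (0 : ℝ), (f₁ x).IsHermitian)
    (hf₂herm : ∀ x ∈ Iic (0 : ℝ), (f₂ x).IsHermitian)
    (hf₁pos : ∀ x ∈ Iic (0 : ℝ), (f₁ x).PosDef)
    (hf₂pos : ∀ x ∈ Iic (0 : ℝ), (f₂ x).PosSemidef)
    (B : Matrix (Fin n) (Fin n) ℂ) (hB : B.IsHermitian)
    (y₀ y₀' y₀'' : ℝ → EuclideanSpace ℂ (Fin n))
    (hy₀ne : ∃ x ∈ Iic (0 : ℝ), y₀ x ≠ 0)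
    (hy₀1 : ∀ x ∈ Iic (0 : ℝ), HasDerivWithinAt y₀ (y₀' x) (Iic 0) x)
    (hy₀2 : ∀ x ∈ Iic (0 : ℝ), HasDerivWithinAt y₀' (y₀'' x) (Iic 0) x)
    (hy₀cont : ContinuousOn y₀'' (Iic 0))
    (hy₀L2 : Integrable (fun x => ‖y₀ x‖ ^ 2) (volume.restrict (Iic 0)))
    (hy₀'L2 : Integrable (fun x => ‖y₀' x‖ ^ 2) (volume.restrict (Iic 0)))
    (hy₀''L2 : Integrable (fun x => ‖y₀'' x‖ ^ 2) (volume.restrict (Iic 0)))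
    (hy₀eqn : ∀ x ∈ Iic (0 : ℝ), y₀'' x + mact (V x) (y₀ x)
        = (lam₀ : ℂ) • mact (f₁ x) (y₀ x) + (lam₀ : ℂ) ^ 2 • mact (f₂ x) (y₀ x))
    (hy₀bc : mact B (y₀ 0) = y₀' 0) :
    ¬ ∃ y₁ y₁' y₁'' : ℝ → EuclideanSpace ℂ (Fin n),
      (∀ x ∈ Iic (0 : ℝ), HasDerivWithinAt y₁ (y₁' x) (Iic 0) x) ∧
      (∀ x ∈ Iic (0 : ℝ), HasDerivWithinAt y₁' (y₁'' x) (Iic 0) x) ∧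
      ContinuousOn y₁'' (Iic 0) ∧
      Integrable (fun x => ‖y₁ x‖ ^ 2) (volume.restrict (Iic 0)) ∧
      Integrable (fun x => ‖y₁' x‖ ^ 2) (volume.restrict (Iic 0)) ∧
      Integrable (fun x => ‖y₁'' x‖ ^ 2) (volume.restrict (Iic 0)) ∧
      mact B (y₁ 0) = y₁' 0 ∧
      (∀ x ∈ Iic (0 : ℝ),
        y₁'' x + mact (V x) (y₁ x) - (lam₀ : ℂ) • mact (f₁ x) (y₁ x)
            - (lam₀ : ℂ) ^ 2 • mact (f₂ x) (y₁ x)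
          = mact (f₁ x + (2 * lam₀ : ℂ) • f₂ x) (y₀ x)) := by
  rintro ⟨y₁, z₁, w₁, hy₁1, hy₁2, hy₁cont, hy₁L2, hz₁L2, hw₁L2, hy₁bc, hy₁eqn⟩
  -- continuity of the solutions
  have hy₀c : ContinuousOn y₀ (Iic 0) := fun x hx => (hy₀1 x hx).continuousWithinAt
  have hy₀'c : ContinuousOn y₀' (Iic 0) := fun x hx => (hy₀2 x hx).continuousWithinAt
  have hy₁c : ContinuousOn y₁ (Iic 0) := fun x hx => (hy₁1 x hx).continuousWithinAt
  have hz₁c : ContinuousOn z₁ (Iic 0) := fun x hx => (hy₁2 x hx).continuousWithinAt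
  -- the Wronskian-type function and its derivative
  set W : ℝ → ℂ := fun x => ⟪y₀ x, z₁ x⟫_ℂ - ⟪y₀' x, y₁ x⟫_ℂ with hWdef
  set g : ℝ → ℂ := fun x => ⟪y₀ x, mact (f₁ x + (2 * lam₀ : ℂ) • f₂ x) (y₀ x)⟫_ℂ with hgdef
  have hWcont : ContinuousOn W (Iic 0) :=
    (hy₀c.inner hz₁c).sub (hy₀'c.inner hy₁c)
  have hgFcont : ContinuousOn (fun x => f₁ x + (2 * lam₀ : ℂ) • f₂ x) (Iic 0) :=
    hf₁cont.add (hf₂cont.const_smul (2 * lam₀ : ℂ) :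
      ContinuousOn (fun x => (2 * lam₀ : ℂ) • f₂ x) (Iic 0))
  have hgcont : ContinuousOn g (Iic 0) := hy₀c.inner (mact_contOn hgFcont hy₀c)
  have hderivW : ∀ x ∈ Iic (0 : ℝ), HasDerivWithinAt W (g x) (Iic 0) x := by
    intro x hx
    have h1 := (hy₀1 x hx).inner ℂ (hy₁2 x hx)
    have h2 := (hy₀2 x hx).inner ℂ (hy₁1 x hx)
    have h := h1.sub h2
    convert h using 1
    · rfl
    · rfl
    have e₀ : y₀'' x = (lam₀ : ℂ) • mact (f₁ x) (y₀ x) + (lam₀ : ℂ) ^ 2 • mact (f₂ x) (y₀ x)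
        - mact (V x) (y₀ x) := by
      rw [← hy₀eqn x hx]; abel
    have e₁ : w₁ x = mact (f₁ x + (2 * lam₀ : ℂ) • f₂ x) (y₀ x)
        + ((lam₀ : ℂ) • mact (f₁ x) (y₁ x) + (lam₀ : ℂ) ^ 2 • mact (f₂ x) (y₁ x)
          - mact (V x) (y₁ x)) := by
      rw [← hy₁eqn x hx]; abel
    rw [e₀, e₁]
    simp only [inner_add_right, inner_sub_right, inner_add_left, inner_sub_left,
      inner_smul_right, inner_smul_left, map_pow, Complex.conj_ofReal,
      mact_symm (hVherm x hx), mact_symm (hf₁herm x hx), mact_symm (hf₂herm x hx)]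
    ring
  -- g is a nonnegative real on Iic 0
  set G : ℝ → ℝ := fun x => (g x).re with hGdef
  have hcomb : ∀ p q : ℂ, p.im = 0 → q.im = 0 →
      (p + (2 * (lam₀ : ℂ)) * q).re = p.re + 2 * lam₀ * q.re
        ∧ (p + (2 * (lam₀ : ℂ)) * q).im = 0 := by
    intro p q hp hq
    constructor <;>
      simp [Complex.add_re, Complex.mul_re, Complex.add_im, Complex.mul_im, hp, hq]
  have hgG : ∀ x ∈ Iic (0 : ℝ), g x = (G x : ℂ) ∧ 0 ≤ G x := by
    intro x hx
    have hz₁' : (0 : ℂ) ≤ ⟪y₀ x, mact (f₁ x) (y₀ x)⟫_ℂ :=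
      mact_self_nonneg (hf₁pos x hx).posSemidef _
    have hz₂' : (0 : ℂ) ≤ ⟪y₀ x, mact (f₂ x) (y₀ x)⟫_ℂ :=
      mact_self_nonneg (hf₂pos x hx) _
    obtain ⟨h1re, h1im⟩ := Complex.nonneg_iff.mp hz₁'
    obtain ⟨h2re, h2im⟩ := Complex.nonneg_iff.mp hz₂'
    have hge : g x = ⟪y₀ x, mact (f₁ x) (y₀ x)⟫_ℂ
        + (2 * (lam₀ : ℂ)) * ⟪y₀ x, mact (f₂ x) (y₀ x)⟫_ℂ := by
      simp [hgdef, mact_add, mact_smul, inner_add_right, inner_smul_right]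
    obtain ⟨hre, him⟩ := hcomb _ _ h1im.symm h2im.symm
    have hGx : G x = (⟪y₀ x, mact (f₁ x) (y₀ x)⟫_ℂ).re
        + 2 * lam₀ * (⟪y₀ x, mact (f₂ x) (y₀ x)⟫_ℂ).re := by
      rw [hGdef]; simp only; rw [hge, hre]
    refine ⟨Complex.ext (by simp [hGdef]) ?_, ?_⟩
    · rw [hge] at *
      rw [him, Complex.ofReal_im]
    · rw [hGx]; positivity
  have hGcont : ContinuousOn G (Iic 0) := Complex.continuous_re.comp_continuousOn hgcont
  -- W(0) = 0 by the Robin boundary condition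
  have hW0 : W 0 = 0 := by
    simp only [hWdef, ← hy₀bc, ← hy₁bc, mact_symm hB, sub_self]
  -- fundamental theorem of calculus
  have hFTC : ∀ a ≤ (0 : ℝ), ∫ x in a..0, g x = W 0 - W a := by
    intro a ha
    apply intervalIntegral.integral_eq_sub_of_hasDeriv_right_of_le ha
    · exact hWcont.mono (Icc_subset_Iic_self)
    · intro x hx
      exact ((hderivW x (le_of_lt hx.2)).hasDerivAt (Iic_mem_nhds hx.2)).hasDerivWithinAt
    · exact (hgcont.mono Icc_subset_Iic_self).intervalIntegrable_of_Icc ha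
  have hgInt : ∀ a b : ℝ, a ≤ b → b ≤ 0 → IntervalIntegrable G volume a b := by
    intro a b hab hb
    exact ((hGcont.mono (Icc_subset_Iic_self.trans (Iic_subset_Iic.mpr hb)))).intervalIntegrable_of_Icc hab
  have hWa : ∀ a ≤ (0 : ℝ), W a = -((∫ x in a..0, G x : ℝ) : ℂ) := by
    intro a ha
    have h1 : ∫ x in a..0, g x = ((∫ x in a..0, G x : ℝ) : ℂ) := by
      rw [← intervalIntegral.integral_ofReal]
      apply intervalIntegral.integral_congr
      intro x hx
      rw [Set.uIcc_of_le ha] at hx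
      exact (hgG x (Icc_subset_Iic_self hx)).1
    have := hFTC a ha
    rw [hW0, h1] at this
    linear_combination this
  -- choose the point of positivity
  obtain ⟨x₀, hx₀, hx₀ne⟩ := hy₀ne
  have hc : 0 < G x₀ := by
    have h1 : (0 : ℂ) < ⟪y₀ x₀, mact (f₁ x₀) (y₀ x₀)⟫_ℂ := mact_self_pos (hf₁pos x₀ hx₀) hx₀ne
    have hz₂' : (0 : ℂ) ≤ ⟪y₀ x₀, mact (f₂ x₀) (y₀ x₀)⟫_ℂ := mact_self_nonneg (hf₂pos x₀ hx₀) _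
    obtain ⟨h1re, h1im⟩ := Complex.lt_def.mp h1
    obtain ⟨h2re, h2im⟩ := Complex.nonneg_iff.mp hz₂'
    have hge : g x₀ = ⟪y₀ x₀, mact (f₁ x₀) (y₀ x₀)⟫_ℂ
        + (2 * (lam₀ : ℂ)) * ⟪y₀ x₀, mact (f₂ x₀) (y₀ x₀)⟫_ℂ := by
      simp [hgdef, mact_add, mact_smul, inner_add_right, inner_smul_right]
    obtain ⟨hre, _⟩ := hcomb _ _ (h1im.symm.trans Complex.zero_im) h2im.symm
    have hGx : G x₀ = (⟪y₀ x₀, mact (f₁ x₀) (y₀ x₀)⟫_ℂ).re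
        + 2 * lam₀ * (⟪y₀ x₀, mact (f₂ x₀) (y₀ x₀)⟫_ℂ).re := by
      rw [hGdef]; simp only; rw [hge, hre]
    rw [hGx]
    simp only [Complex.zero_re] at h1re
    positivity
  obtain ⟨δ, hδ, hball⟩ := Metric.continuousWithinAt_iff.mp (hGcont x₀ hx₀) (G x₀ / 2)
    (by positivity)
  set a₀ : ℝ := x₀ - δ / 2 with ha₀def
  have ha₀le : a₀ ≤ x₀ := by simp [ha₀def]; positivity
  have ha₀0 : a₀ ≤ 0 := ha₀le.trans hx₀
  have hGlow : ∀ x ∈ Icc a₀ x₀, G x₀ / 2 ≤ G x := by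
    intro x hx
    have hxIic : x ∈ Iic (0 : ℝ) := hx.2.trans hx₀
    have hdist : dist x x₀ < δ := by
      rw [Real.dist_eq, abs_sub_lt_iff]
      constructor
      · linarith [hx.2, hδ]
      · have := hx.1; rw [ha₀def] at this; linarith
    have := hball hxIic hdist
    rw [Real.dist_eq, abs_sub_lt_iff] at this
    linarith [this.1]
  set ε₀ : ℝ := G x₀ / 2 * (δ / 2) with hε₀def
  have hε₀pos : 0 < ε₀ := by positivity
  have hlow : ∀ a ≤ a₀, ε₀ ≤ ∫ x in a..0, G x := by
    intro a ha
    have ha0 : a ≤ 0 := ha.trans ha₀0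
    have split1 : ∫ x in a..0, G x
        = (∫ x in a..a₀, G x) + (∫ x in a₀..x₀, G x) + (∫ x in x₀..0, G x) := by
      rw [intervalIntegral.integral_add_adjacent_intervals (hgInt a a₀ ha ha₀0)
          (hgInt a₀ x₀ ha₀le hx₀),
        intervalIntegral.integral_add_adjacent_intervals
          (IntervalIntegrable.trans (hgInt a a₀ ha ha₀0) (hgInt a₀ x₀ ha₀le hx₀))
          (hgInt x₀ 0 hx₀ le_rfl)]
    have h1 : 0 ≤ ∫ x in a..a₀, G x :=
      intervalIntegral.integral_nonneg ha
        (fun u hu => (hgG u ((hu.2.trans ha₀0))).2)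
    have h3 : 0 ≤ ∫ x in x₀..0, G x :=
      intervalIntegral.integral_nonneg hx₀ (fun u hu => (hgG u hu.2).2)
    have h2 : ε₀ ≤ ∫ x in a₀..x₀, G x := by
      have hconst : ∫ x in a₀..x₀, (G x₀ / 2 : ℝ) = (x₀ - a₀) * (G x₀ / 2) := by
        rw [intervalIntegral.integral_const]; simp [smul_eq_mul]
      have hmono : ∫ x in a₀..x₀, (G x₀ / 2 : ℝ) ≤ ∫ x in a₀..x₀, G x :=
        intervalIntegral.integral_mono_on ha₀le intervalIntegrable_const
          (hgInt a₀ x₀ ha₀le hx₀) hGlow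
      have hx₀a₀ : x₀ - a₀ = δ / 2 := by rw [ha₀def]; ring
      rw [hconst, hx₀a₀] at hmono
      calc ε₀ = δ / 2 * (G x₀ / 2) := by rw [hε₀def]; ring
        _ ≤ _ := hmono
    linarith [split1, h1, h2, h3]
  -- W is integrable on Iic 0
  have hWmeas : AEStronglyMeasurable W (volume.restrict (Iic 0)) :=
    hWcont.aestronglyMeasurable measurableSet_Iic
  have hbound : Integrable (fun x =>
      (‖y₀ x‖ ^ 2 + ‖z₁ x‖ ^ 2 + (‖y₀' x‖ ^ 2 + ‖y₁ x‖ ^ 2)) / 2)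
      (volume.restrict (Iic 0)) :=
    (((hy₀L2.add hz₁L2).add (hy₀'L2.add hy₁L2)).div_const 2)
  have hWInt : Integrable W (volume.restrict (Iic 0)) := by
    apply Integrable.mono' hbound hWmeas
    filter_upwards with x
    have h1 : ‖(⟪y₀ x, z₁ x⟫_ℂ : ℂ)‖ ≤ ‖y₀ x‖ * ‖z₁ x‖ := norm_inner_le_norm _ _
    have h2 : ‖(⟪y₀' x, y₁ x⟫_ℂ : ℂ)‖ ≤ ‖y₀' x‖ * ‖y₁ x‖ := norm_inner_le_norm _ _
    have h3 : ‖W x‖ ≤ ‖(⟪y₀ x, z₁ x⟫_ℂ : ℂ)‖ + ‖(⟪y₀' x, y₁ x⟫_ℂ : ℂ)‖ := norm_sub_le _ _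
    nlinarith [sq_nonneg (‖y₀ x‖ - ‖z₁ x‖), sq_nonneg (‖y₀' x‖ - ‖y₁ x‖),
      norm_nonneg (y₀ x), norm_nonneg (z₁ x), norm_nonneg (y₀' x), norm_nonneg (y₁ x)]
  -- derive the contradiction
  have hWInt' : Integrable W (volume.restrict (Iic a₀)) :=
    hWInt.mono_measure (Measure.restrict_mono (Iic_subset_Iic.mpr ha₀0) le_rfl)
  have hconst : Integrable (fun _ : ℝ => ε₀) (volume.restrict (Iic a₀)) := by
    apply Integrable.mono hWInt' aestronglyMeasurable_const
    filter_upwards [ae_restrict_mem measurableSet_Iic] with x hx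
    have hx0 : x ≤ 0 := le_trans hx ha₀0
    have := hWa x hx0
    have hnorm : ‖W x‖ = |∫ t in x..0, G t| := by
      rw [this, norm_neg, Complex.norm_real, Real.norm_eq_abs]
    rw [hnorm]
    have hge := hlow x hx
    rw [Real.norm_eq_abs, abs_of_pos hε₀pos]
    calc ε₀ ≤ ∫ t in x..0, G t := hge
      _ ≤ |∫ t in x..0, G t| := le_abs_self _
  rw [integrable_const_iff] at hconst
  rcases hconst with h | h
  · exact absurd h (ne_of_gt hε₀pos)
  · have h := h.measure_univ_lt_top; rw [Measure.restrict_apply_univ, Real.volume_Iic] at h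
    exact absurd h (by simp)
end
end

section
/- Let V, f₁, f₂ : ℝ → M_n(ℂ) be continuous, bounded, Hermitian-matrix-valued functions such that f₁(x) is positive definite for every x and f₂(x) − δ·I is positive semidefinite for every x, for some fixed δ > 0. Let L ∈ ℝ and let λ ∈ ℝ be such that there exists a nonzero H²-solution y on (-∞, L] of y″(x) + V(x)y(x) = λ f₁(x)y(x) + λ² f₂(x)y(x) with Dirichlet boundary condition y(L) = 0. Then λ ≤ √(‖f₂‖_{L∞(ℝ)} · ‖V‖_{L∞(ℝ)})/δ; in particular this upper bound is independent of L. -/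
open MeasureTheory Matrix Set
open scoped ComplexOrder

noncomputable section

open scoped InnerProductSpace

section helpers
variable {n : ℕ}

lemma real_inner_E (u v : EuclideanSpace ℂ (Fin n)) :
    ⟪u, v⟫_ℝ = (⟪u, v⟫_ℂ).re := by
  simp [PiLp.inner_apply, Complex.inner, Complex.re_sum]

lemma inner_mact (M : Matrix (Fin n) (Fin n) ℂ) (v : EuclideanSpace ℂ (Fin n)) :
    ⟪v, mact M v⟫_ℂ = dotProduct (star (WithLp.equiv 2 _ v)) (M *ᵥ (WithLp.equiv 2 _ v)) := by
  rw [mact, EuclideanSpace.inner_eq_star_dotProduct, Matrix.ofLp_toEuclideanCLM,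
    dotProduct_comm]
  rfl

lemma real_inner_mact_nonneg {M : Matrix (Fin n) (Fin n) ℂ} (hM : M.PosSemidef)
    (v : EuclideanSpace ℂ (Fin n)) : 0 ≤ ⟪v, mact M v⟫_ℝ := by
  rw [real_inner_E, inner_mact]
  exact hM.re_dotProduct_nonneg _

lemma mact_linear (A B : Matrix (Fin n) (Fin n) ℂ) (v : EuclideanSpace ℂ (Fin n)) :
    mact (A - B) v = mact A v - mact B v := by
  simp [mact, map_sub]

lemma mact_smul_one (c : ℂ) (v : EuclideanSpace ℂ (Fin n)) :
    mact (c • (1 : Matrix (Fin n) (Fin n) ℂ)) v = c • v := by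
  simp [mact, _root_.map_smul]

lemma real_inner_mact_ge {M : Matrix (Fin n) (Fin n) ℂ} {δ : ℝ}
    (hM : (M - (δ : ℂ) • (1 : Matrix (Fin n) (Fin n) ℂ)).PosSemidef)
    (v : EuclideanSpace ℂ (Fin n)) : δ * ‖v‖ ^ 2 ≤ ⟪v, mact M v⟫_ℝ := by
  have h := real_inner_mact_nonneg hM v
  rw [mact_linear, inner_sub_right, mact_smul_one] at h
  have h2 : ⟪v, (δ : ℂ) • v⟫_ℝ = δ * ‖v‖ ^ 2 := by
    rw [real_inner_E, inner_smul_right]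
    simp [inner_self_eq_norm_sq_to_K]
    left
    norm_cast
  linarith [h, h2.symm.le]

lemma real_inner_mact_le (M : Matrix (Fin n) (Fin n) ℂ) (v : EuclideanSpace ℂ (Fin n)) :
    ⟪v, mact M v⟫_ℝ ≤ ‖Matrix.toEuclideanCLM (𝕜 := ℂ) M‖ * ‖v‖ ^ 2 := by
  calc ⟪v, mact M v⟫_ℝ ≤ ‖v‖ * ‖mact M v‖ := real_inner_le_norm _ _
    _ ≤ ‖v‖ * (‖Matrix.toEuclideanCLM (𝕜 := ℂ) M‖ * ‖v‖) := by
        gcongr; exact (Matrix.toEuclideanCLM (𝕜 := ℂ) M).le_opNorm v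
    _ = ‖Matrix.toEuclideanCLM (𝕜 := ℂ) M‖ * ‖v‖ ^ 2 := by ring

lemma delta_le_norm {n : ℕ} (hn : 1 ≤ n) {M : Matrix (Fin n) (Fin n) ℂ} {δ : ℝ}
    (hM : (M - (δ : ℂ) • (1 : Matrix (Fin n) (Fin n) ℂ)).PosSemidef) :
    δ ≤ ‖Matrix.toEuclideanCLM (𝕜 := ℂ) M‖ := by
  set v : EuclideanSpace ℂ (Fin n) := EuclideanSpace.single (⟨0, hn⟩ : Fin n) (1 : ℂ) with hv
  have hv1 : ‖v‖ = 1 := by simp [hv, EuclideanSpace.norm_single]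
  have h1 := real_inner_mact_ge hM v
  have h2 := real_inner_mact_le M v
  rw [hv1] at h1 h2
  have h3 := h1.trans h2
  rw [one_pow, mul_one, mul_one] at h3
  exact h3

lemma real_inner_coe_smul (c : ℝ) (u v : EuclideanSpace ℂ (Fin n)) :
    ⟪u, (c : ℂ) • v⟫_ℝ = c * ⟪u, v⟫_ℝ := by
  rw [show (c : ℂ) • v = c • v from by
    rw [show ((c : ℝ) : ℂ) = algebraMap ℝ ℂ c from rfl, algebraMap_smul],
    real_inner_smul_right]

end helpers

/-- every real eigenvalue of the truncated Dirichlet problem on `(-∞, L]`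
satisfies `λ ≤ √(‖f₂‖_{L∞(ℝ)} ‖V‖_{L∞(ℝ)}) / δ`, a bound independent of `L`. -/
theorem truncated_dirichlet_real_eigenvalue_upper_bound {n : ℕ} (hn : 1 ≤ n)
    (V f₁ f₂ : ℝ → Matrix (Fin n) (Fin n) ℂ) (δ : ℝ) (hδ : 0 < δ)
    (hVcont : Continuous V)
    (hf₁cont : Continuous f₁)
    (hf₂cont : Continuous f₂)
    (hbdd : ∃ C : ℝ, ∀ x : ℝ,
      ‖Matrix.toEuclideanCLM (𝕜 := ℂ) (V x)‖ ≤ C ∧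
      ‖Matrix.toEuclideanCLM (𝕜 := ℂ) (f₁ x)‖ ≤ C ∧
      ‖Matrix.toEuclideanCLM (𝕜 := ℂ) (f₂ x)‖ ≤ C)
    (hVherm : ∀ x : ℝ, (V x).IsHermitian)
    (hf₁herm : ∀ x : ℝ, (f₁ x).IsHermitian)
    (hf₂herm : ∀ x : ℝ, (f₂ x).IsHermitian)
    (hf₁pos : ∀ x : ℝ, (f₁ x).PosDef)
    (hf₂pos : ∀ x : ℝ, (f₂ x - (δ : ℂ) • (1 : Matrix (Fin n) (Fin n) ℂ)).PosSemidef)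
    (L : ℝ) (lam : ℝ)
    (hev : ∃ y y' y'' : ℝ → EuclideanSpace ℂ (Fin n),
      (∃ x ∈ Iic L, y x ≠ 0) ∧
      (∀ x ∈ Iic L, HasDerivWithinAt y (y' x) (Iic L) x) ∧
      (∀ x ∈ Iic L, HasDerivWithinAt y' (y'' x) (Iic L) x) ∧
      ContinuousOn y'' (Iic L) ∧
      Integrable (fun x => ‖y x‖ ^ 2) (volume.restrict (Iic L)) ∧
      Integrable (fun x => ‖y' x‖ ^ 2) (volume.restrict (Iic L)) ∧
      Integrable (fun x => ‖y'' x‖ ^ 2) (volume.restrict (Iic L)) ∧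
      (∀ x ∈ Iic L, y'' x + mact (V x) (y x)
          = (lam : ℂ) • mact (f₁ x) (y x) + (lam : ℂ) ^ 2 • mact (f₂ x) (y x)) ∧
      y L = 0) :
    lam ≤ Real.sqrt
        ((⨆ x : ℝ, ‖Matrix.toEuclideanCLM (𝕜 := ℂ) (f₂ x)‖) *
          (⨆ x : ℝ, ‖Matrix.toEuclideanCLM (𝕜 := ℂ) (V x)‖)) / δ := by
    classical
  obtain ⟨C0, hC0⟩ := hbdd
  obtain ⟨y, y', y'', ⟨x₀, hx₀L, hx₀⟩, hy, hy', hy''c, hyI, hy'I, hy''I, heq, hyL⟩ := hev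
  set CV := ⨆ x : ℝ, ‖Matrix.toEuclideanCLM (𝕜 := ℂ) (V x)‖ with hCVdef
  set C2 := ⨆ x : ℝ, ‖Matrix.toEuclideanCLM (𝕜 := ℂ) (f₂ x)‖ with hC2def
  have hbV : BddAbove (range fun x : ℝ => ‖Matrix.toEuclideanCLM (𝕜 := ℂ) (V x)‖) :=
    ⟨C0, by rintro r ⟨x, rfl⟩; exact (hC0 x).1⟩
  have hb2 : BddAbove (range fun x : ℝ => ‖Matrix.toEuclideanCLM (𝕜 := ℂ) (f₂ x)‖) :=
    ⟨C0, by rintro r ⟨x, rfl⟩; exact (hC0 x).2.2⟩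
  have hVle : ∀ x : ℝ, ‖Matrix.toEuclideanCLM (𝕜 := ℂ) (V x)‖ ≤ CV := fun x => le_ciSup hbV x
  have hCVnn : 0 ≤ CV := le_trans (norm_nonneg _) (hVle 0)
  have hδ2 : δ ≤ C2 := (delta_le_norm hn (hf₂pos 0)).trans (le_ciSup hb2 0)
  rcases le_or_gt lam 0 with hlam | hlam
  · exact hlam.trans (div_nonneg (Real.sqrt_nonneg _) hδ.le)
  -- continuity
  have hyc : ContinuousOn y (Iic L) := fun x hx => (hy x hx).continuousWithinAt
  have hy'c : ContinuousOn y' (Iic L) := fun x hx => (hy' x hx).continuousWithinAt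
  set φ : ℝ → ℝ := fun x => ⟪y'' x, y x⟫_ℝ with hφdef
  set G : ℝ → ℝ := fun x => ⟪y' x, y x⟫_ℝ with hGdef
  have hφm : AEStronglyMeasurable φ (volume.restrict (Iic L)) :=
    (ContinuousOn.inner hy''c hyc).aestronglyMeasurable measurableSet_Iic
  have hGm : AEStronglyMeasurable G (volume.restrict (Iic L)) :=
    (ContinuousOn.inner hy'c hyc).aestronglyMeasurable measurableSet_Iic
  have hφint : IntegrableOn φ (Iic L) volume := by
    refine Integrable.mono' (hy''I.add hyI) hφm (Filter.Eventually.of_forall fun x => ?_)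
    simp only [hφdef, Pi.add_apply, Real.norm_eq_abs]
    have h1 := abs_real_inner_le_norm (y'' x) (y x)
    nlinarith [norm_nonneg (y'' x), norm_nonneg (y x), sq_nonneg (‖y'' x‖ - ‖y x‖)]
  have hGint : IntegrableOn G (Iic L) volume := by
    refine Integrable.mono' (hy'I.add hyI) hGm (Filter.Eventually.of_forall fun x => ?_)
    simp only [hGdef, Pi.add_apply, Real.norm_eq_abs]
    have h1 := abs_real_inner_le_norm (y' x) (y x)
    nlinarith [norm_nonneg (y' x), norm_nonneg (y x), sq_nonneg (‖y' x‖ - ‖y x‖)]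
  -- derivative of G
  have hyIo : IntegrableOn (fun x => ‖y x‖ ^ 2) (Iic L) volume := hyI
  have hy'Io : IntegrableOn (fun x => ‖y' x‖ ^ 2) (Iic L) volume := hy'I
  have hy''Io : IntegrableOn (fun x => ‖y'' x‖ ^ 2) (Iic L) volume := hy''I
  have hGd : ∀ x ∈ Iic L, HasDerivWithinAt G (‖y' x‖ ^ 2 + φ x) (Iic L) x := by
    intro x hx
    have h := HasDerivWithinAt.inner ℝ (hy' x hx) (hy x hx)
    rw [real_inner_self_eq_norm_sq] at h
    exact h
  have hGL : G L = 0 := by simp [hGdef, hyL]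
  -- FTC bound
  have hFTC : ∀ a ≤ L, ∫ x in Ioc a L, φ x ≤ |G a| := by
    intro a ha
    have hsub : Icc a L ⊆ Iic L := Icc_subset_Iic_self
    have hcont : ContinuousOn G (Icc a L) := fun x hx =>
      ((hGd x (hsub hx)).continuousWithinAt).mono hsub
    have hderiv : ∀ x ∈ Ioo a L, HasDerivWithinAt G (‖y' x‖ ^ 2 + φ x) (Ioi x) x := fun x hx =>
      (((hGd x (le_of_lt hx.2)).hasDerivAt (Iic_mem_nhds hx.2)).hasDerivWithinAt)
    have hDint : IntegrableOn (fun x => ‖y' x‖ ^ 2 + φ x) (Iic L) volume := hy'Io.add hφint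
    have hDiv : IntervalIntegrable (fun x => ‖y' x‖ ^ 2 + φ x) volume a L :=
      (hDint.mono_set (by rw [uIcc_of_le ha]; exact Icc_subset_Iic_self)).intervalIntegrable
    have hFTC0 := intervalIntegral.integral_eq_sub_of_hasDeriv_right_of_le ha hcont hderiv hDiv
    rw [intervalIntegral.integral_of_le ha] at hFTC0
    have hIoc : IntegrableOn φ (Ioc a L) volume := hφint.mono_set Ioc_subset_Iic_self
    have hIoc' : IntegrableOn (fun x => ‖y' x‖ ^ 2) (Ioc a L) volume :=
      hy'Io.mono_set Ioc_subset_Iic_self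
    rw [integral_add hIoc' hIoc, hGL] at hFTC0
    have h0 : 0 ≤ ∫ x in Ioc a L, ‖y' x‖ ^ 2 :=
      setIntegral_nonneg measurableSet_Ioc fun x _ => sq_nonneg _
    have h1 := neg_le_abs (G a)
    linarith
  -- small values of G near -∞
  have hsmallG : ∀ ε > (0:ℝ), ∀ c ≤ L, ∃ a ≤ c, |G a| < ε := by
    intro ε hε c hc
    by_contra hcon
    push_neg at hcon
    have habs : IntegrableOn (fun x => |G x|) (Iic c) volume :=
      (hGint.mono_set (Iic_subset_Iic.mpr hc)).abs
    have hconst : Integrable (fun _ : ℝ => ε) (volume.restrict (Iic c)) := by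
      refine habs.mono' aestronglyMeasurable_const ?_
      refine (ae_restrict_iff' measurableSet_Iic).2 (Filter.Eventually.of_forall fun x hx => ?_)
      rw [Real.norm_eq_abs, abs_of_pos hε]
      exact hcon x hx
    rw [integrable_const_iff] at hconst
    rcases hconst with h1 | h2
    · exact absurd h1 (ne_of_gt hε)
    · have h2 := h2.measure_univ_lt_top; rw [Measure.restrict_apply_univ, Real.volume_Iic] at h2
      exact absurd h2 (by simp)
  -- tail of |φ| tends to 0
  have hUnion : (⋃ k : ℕ, Ioc (L - (k : ℝ)) L) = Iic L := by
    ext t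
    simp only [mem_iUnion, mem_Ioc, mem_Iic]
    constructor
    · rintro ⟨k, _, h⟩; exact h
    · intro ht
      obtain ⟨k, hk⟩ := exists_nat_gt (L - t)
      exact ⟨k, by linarith, ht⟩
  have hmono : Monotone fun k : ℕ => Ioc (L - (k : ℝ)) L := fun k l hkl =>
    Ioc_subset_Ioc_left (by have : (k : ℝ) ≤ l := Nat.cast_le.mpr hkl; linarith)
  have hφa : IntegrableOn (fun x => |φ x|) (Iic L) volume := hφint.abs
  have htend := tendsto_setIntegral_of_monotone (fun k : ℕ => measurableSet_Ioc) hmono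
    (hUnion ▸ hφa)
  rw [hUnion] at htend
  -- ∫ φ ≤ 0
  have hIφ : ∫ x in Iic L, φ x ≤ 0 := by
    have hεbound : ∀ ε > (0:ℝ), ∫ x in Iic L, φ x ≤ ε := by
      intro ε hε
      have hlt : (∫ x in Iic L, |φ x|) - ε / 2 < ∫ x in Iic L, |φ x| := by linarith
      obtain ⟨k, hk⟩ := (htend.eventually (eventually_gt_nhds hlt)).exists
      have hkL : L - (k : ℝ) ≤ L := by
        have : (0:ℝ) ≤ k := Nat.cast_nonneg k
        linarith
      have hsplit : ∫ x in Iic L, |φ x|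
          = (∫ x in Iic (L - (k:ℝ)), |φ x|) + ∫ x in Ioc (L - (k:ℝ)) L, |φ x| := by
        rw [← setIntegral_union (Iic_disjoint_Ioc le_rfl) measurableSet_Ioc
          (hφa.mono_set (Iic_subset_Iic.mpr hkL)) (hφa.mono_set Ioc_subset_Iic_self),
          Iic_union_Ioc_eq_Iic hkL]
      have htail : (∫ x in Iic (L - (k:ℝ)), |φ x|) < ε / 2 := by linarith
      obtain ⟨a, hac, hGa⟩ := hsmallG (ε / 2) (by linarith) (L - (k:ℝ)) hkL
      have haL : a ≤ L := hac.trans hkL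
      have hsplit2 : ∫ x in Iic L, φ x
          = (∫ x in Iic a, φ x) + ∫ x in Ioc a L, φ x := by
        rw [← setIntegral_union (Iic_disjoint_Ioc le_rfl) measurableSet_Ioc
          (hφint.mono_set (Iic_subset_Iic.mpr haL)) (hφint.mono_set Ioc_subset_Iic_self),
          Iic_union_Ioc_eq_Iic haL]
      have h1 : ∫ x in Iic a, φ x ≤ ∫ x in Iic a, |φ x| := by
        calc ∫ x in Iic a, φ x ≤ |∫ x in Iic a, φ x| := le_abs_self _
          _ ≤ ∫ x in Iic a, |φ x| := by
              simpa [Real.norm_eq_abs] using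
                norm_integral_le_integral_norm (μ := volume.restrict (Iic a)) φ
      have h2 : ∫ x in Iic a, |φ x| ≤ ∫ x in Iic (L - (k:ℝ)), |φ x| := by
        refine setIntegral_mono_set (hφa.mono_set (Iic_subset_Iic.mpr hkL))
          ?_ (HasSubset.Subset.eventuallyLE (Iic_subset_Iic.mpr hac))
        exact Filter.Eventually.of_forall fun x => abs_nonneg _
      have h3 := hFTC a haL
      linarith
    by_contra hcon
    push_neg at hcon
    have := hεbound ((∫ x in Iic L, φ x) / 2) (by linarith)
    linarith
  -- positivity of N
  have hx₀lt : x₀ < L := lt_of_le_of_ne hx₀L (by rintro rfl; exact hx₀ hyL)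
  have hca : ContinuousAt y x₀ :=
    ((hy x₀ hx₀L).continuousWithinAt).continuousAt (Iic_mem_nhds hx₀lt)
  have hev' : ∀ᶠ t in nhds x₀, y t ≠ 0 := hca.eventually_ne hx₀
  obtain ⟨ε₀, hε₀, hball⟩ := Metric.eventually_nhds_iff_ball.mp hev'
  set ε' := min ε₀ (L - x₀) with hε'def
  have hε'pos : 0 < ε' := lt_min hε₀ (by linarith)
  have hsubball : Metric.ball x₀ ε' ⊆ (Function.support fun x => ‖y x‖ ^ 2) ∩ Iic L := by
    intro t ht
    have ht1 : t ∈ Metric.ball x₀ ε₀ := Metric.ball_subset_ball (min_le_left _ _) ht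
    have ht2 : |t - x₀| < L - x₀ := by
      have h := Metric.mem_ball.mp ht
      rw [Real.dist_eq] at h
      exact h.trans_le (min_le_right _ _)
    constructor
    · exact pow_ne_zero _ (norm_ne_zero_iff.mpr (hball t ht1))
    · have h5 := (abs_lt.mp ht2).2
      simp only [mem_Iic]
      linarith
  have hNpos : 0 < ∫ x in Iic L, ‖y x‖ ^ 2 := by
    rw [setIntegral_pos_iff_support_of_nonneg_ae
      (Filter.Eventually.of_forall fun x => sq_nonneg _) hyI]
    exact lt_of_lt_of_le (Metric.measure_ball_pos volume x₀ hε'pos) (measure_mono hsubball)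
  -- pointwise identity from the ODE
  have hident : ∀ x ∈ Iic L, φ x + ⟪y x, mact (V x) (y x)⟫_ℝ
      = lam * ⟪y x, mact (f₁ x) (y x)⟫_ℝ + lam ^ 2 * ⟪y x, mact (f₂ x) (y x)⟫_ℝ := by
    intro x hx
    have h := heq x hx
    have h2 : ((lam : ℂ) ^ 2) = (((lam ^ 2 : ℝ)) : ℂ) := by push_cast; ring
    rw [h2] at h
    have h3 := congrArg (fun w => ⟪y x, w⟫_ℝ) h
    simp only [inner_add_right, real_inner_coe_smul] at h3
    have h4 : φ x = ⟪y x, y'' x⟫_ℝ := real_inner_comm _ _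
    rw [h4]
    exact h3
  have hpt : ∀ x ∈ Iic L, lam ^ 2 * δ * ‖y x‖ ^ 2 ≤ φ x + CV * ‖y x‖ ^ 2 := by
    intro x hx
    have hA := real_inner_mact_nonneg (hf₁pos x).posSemidef (y x)
    have hB := real_inner_mact_ge (hf₂pos x) (y x)
    have hW := (real_inner_mact_le (V x) (y x)).trans
      (mul_le_mul_of_nonneg_right (hVle x) (sq_nonneg _))
    have hid := hident x hx
    nlinarith [mul_le_mul_of_nonneg_left hB (sq_nonneg lam), mul_nonneg hlam.le hA]
  have hLHS : IntegrableOn (fun x => lam ^ 2 * δ * ‖y x‖ ^ 2) (Iic L) volume := hyIo.const_mul _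
  have hRHS : IntegrableOn (fun x => φ x + CV * ‖y x‖ ^ 2) (Iic L) volume :=
    hφint.add (hyIo.const_mul _)
  have hmain := setIntegral_mono_on hLHS hRHS measurableSet_Iic hpt
  rw [integral_add hφint (hyIo.const_mul _), integral_const_mul, integral_const_mul] at hmain
  have key : lam ^ 2 * δ ≤ CV := by
    refine (mul_le_mul_iff_of_pos_right hNpos).mp ?_
    linarith
  rw [le_div_iff₀ hδ]
  have h0 : 0 ≤ lam * δ := by positivity
  have hsq : (lam * δ) ^ 2 ≤ C2 * CV := by
    have e1 : lam ^ 2 * δ * δ ≤ CV * δ := mul_le_mul_of_nonneg_right key hδ.le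
    have e2 : CV * δ ≤ CV * C2 := mul_le_mul_of_nonneg_left hδ2 hCVnn
    calc (lam * δ) ^ 2 = lam ^ 2 * δ * δ := by ring
      _ ≤ CV * δ := e1
      _ ≤ CV * C2 := e2
      _ = C2 * CV := mul_comm _ _
  calc lam * δ = Real.sqrt ((lam * δ) ^ 2) := (Real.sqrt_sq h0).symm
    _ ≤ Real.sqrt (C2 * CV) := Real.sqrt_le_sqrt hsq
end
end
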